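/- With the Hoeffding decomposition, the conditional second moment of the nonlinear part satisfies E[v̄_{(ij)}² | w_i] = 1/3 and E[v̄_{(ij)}² | w_j] = 1/3 almost surely. -/

import Mathlib

open MeasureTheory ProbabilityTheory Set Filter Topology
open scoped ENNReal

lemma sign_measurable' : Measurable Real.sign := by
  have h : Real.sign = fun x : ℝ => if x < 0 then (-1:ℝ) else if 0 < x then 1 else 0 := by
    funext x; rw [Real.sign]
  rw [h]
  exact Measurable.ite measurableSet_Iio measurable_const
    (Measurable.ite measurableSet_Ioi measurable_const measurable_const)

section CDF

variable {ν : Measure ℝ} [IsProbabilityMeasure ν] {F : ℝ → ℝ}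
  (hFν : ∀ x, F x = (ν (Iic x)).toReal) (hFc : Continuous F)

include hFν

set_option linter.unusedSectionVars false in
lemma F_nonneg (x : ℝ) : 0 ≤ F x := by rw [hFν]; positivity

lemma F_le_one (x : ℝ) : F x ≤ 1 := by
  rw [hFν]
  have h1 : ν (Iic x) ≤ 1 := prob_le_one
  calc (ν (Iic x)).toReal ≤ (1 : ℝ≥0∞).toReal :=
        ENNReal.toReal_mono (by norm_num) h1
    _ = 1 := by simp

lemma F_mono : Monotone F := by
  intro a b hab
  rw [hFν, hFν]
  exact ENNReal.toReal_mono (measure_ne_top _ _) (measure_mono (Iic_subset_Iic.mpr hab))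

lemma F_tendsto_atTop : Tendsto F atTop (𝓝 1) := by
  have h := MeasureTheory.tendsto_measure_Iic_atTop (μ := ν)
  have h2 : Tendsto (fun x => (ν (Iic x)).toReal) atTop (𝓝 ((ν univ).toReal)) :=
    (ENNReal.tendsto_toReal (measure_ne_top _ _)).comp h
  simp only [measure_univ, ENNReal.toReal_one] at h2
  exact h2.congr (fun x => (hFν x).symm)

lemma F_tendsto_seq : Tendsto (fun n : ℕ => F (-(n:ℝ))) atTop (𝓝 0) := by
  have h : Tendsto (fun n : ℕ => ν (Iic (-(n:ℝ)))) atTop (𝓝 (ν (⋂ n : ℕ, Iic (-(n:ℝ))))) := by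
    have := tendsto_measure_iInter_atTop (μ := ν) (s := fun n : ℕ => Iic (-(n:ℝ)))
      (fun n => measurableSet_Iic.nullMeasurableSet)
      (fun a b hab => Iic_subset_Iic.mpr (by exact_mod_cast neg_le_neg (by exact_mod_cast hab)))
      ⟨0, measure_ne_top _ _⟩
    exact this
  have hempty : (⋂ n : ℕ, Iic (-(n:ℝ))) = ∅ := by
    ext y
    simp only [mem_iInter, mem_Iic, mem_empty_iff_false, iff_false, not_forall, not_le]
    obtain ⟨n, hn⟩ := exists_nat_gt (-y)
    exact ⟨n, by linarith⟩
  rw [hempty, measure_empty] at h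
  have h2 : Tendsto (fun n : ℕ => (ν (Iic (-(n:ℝ)))).toReal) atTop (𝓝 ((0:ℝ≥0∞).toReal)) :=
    (ENNReal.tendsto_toReal (by norm_num)).comp h
  simp only [ENNReal.toReal_zero] at h2
  exact h2.congr (fun n => (hFν _).symm)

include hFc

lemma map_F_eq : ν.map F = volume.restrict (Icc (0:ℝ) 1) := by
  have hFm : Measurable F := hFc.measurable
  have : IsProbabilityMeasure (ν.map F) := Measure.isProbabilityMeasure_map hFm.aemeasurable
  have hfin : IsFiniteMeasure (volume.restrict (Icc (0:ℝ) 1)) := by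
    constructor
    rw [Measure.restrict_apply_univ]
    simp [Real.volume_Icc]
  refine MeasureTheory.Measure.ext_of_Iic (ν.map F) _ (fun t => ?_)
  rw [Measure.map_apply hFm measurableSet_Iic, Measure.restrict_apply measurableSet_Iic]
  rcases lt_or_ge t 0 with ht | ht
  · have h1 : F ⁻¹' Iic t = ∅ := by
      ext y; simp only [mem_preimage, mem_Iic, mem_empty_iff_false, iff_false, not_le]
      exact lt_of_lt_of_le ht (F_nonneg hFν y)
    have h2 : Iic t ∩ Icc (0:ℝ) 1 = ∅ := by
      ext y; simp only [mem_inter_iff, mem_Iic, mem_Icc, mem_empty_iff_false, iff_false]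
      rintro ⟨h3, h4, -⟩; linarith
    rw [h1, h2]
    simp
  rcases le_or_gt 1 t with ht1 | ht1
  · have h1 : F ⁻¹' Iic t = univ := by
      ext y; simp only [mem_preimage, mem_Iic, mem_univ, iff_true]
      exact le_trans (F_le_one hFν y) ht1
    have h2 : Iic t ∩ Icc (0:ℝ) 1 = Icc 0 1 := by
      apply inter_eq_self_of_subset_right
      intro y hy; exact le_trans hy.2 ht1
    rw [h1, h2]
    simp [Real.volume_Icc]
  · -- 0 ≤ t < 1
    have h2 : Iic t ∩ Icc (0:ℝ) 1 = Icc 0 t := by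
      ext y; simp only [mem_inter_iff, mem_Iic, mem_Icc]
      constructor
      · rintro ⟨h3, h4, -⟩; exact ⟨h4, h3⟩
      · rintro ⟨h3, h4⟩; exact ⟨h4, h3, le_trans h4 ht1.le⟩
    rw [h2, Real.volume_Icc]
    have key : ν (F ⁻¹' Iic t) = ENNReal.ofReal t := by
      by_cases hS : (F ⁻¹' Iic t).Nonempty
      · -- bounded above
        have hBex : ∀ᶠ y in atTop, t < F y :=
          (F_tendsto_atTop hFν).eventually (eventually_gt_nhds ht1)
        obtain ⟨B, hB⟩ := hBex.exists_forall_of_atTop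
        have hbdd : BddAbove (F ⁻¹' Iic t) := by
          refine ⟨B, fun y hy => ?_⟩
          by_contra hyB
          exact absurd (hB y (le_of_not_ge hyB)) (not_lt.mpr hy)
        have hcl : IsClosed (F ⁻¹' Iic t) := isClosed_Iic.preimage hFc
        set x₀ := sSup (F ⁻¹' Iic t) with hx₀
        have hmem : x₀ ∈ F ⁻¹' Iic t := hcl.csSup_mem hS hbdd
        have hset : F ⁻¹' Iic t = Iic x₀ := by
          ext y
          constructor
          · intro hy; exact le_csSup hbdd hy
          · intro hy
            exact le_trans (F_mono hFν hy) hmem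
        have hFx₀ : F x₀ = t := by
          refine le_antisymm hmem ?_
          by_contra hlt
          push_neg at hlt
          have hx₀B : x₀ ≤ B := by
            by_contra hc
            push_neg at hc
            exact absurd (hB x₀ hc.le) (not_lt.mpr hmem)
          obtain ⟨y, hy1, hy2⟩ := intermediate_value_Icc hx₀B hFc.continuousOn
            (show t ∈ Icc (F x₀) (F B) from ⟨hlt.le, (hB B le_rfl).le⟩)
          have : y ≤ x₀ := le_csSup hbdd (by simp [mem_preimage, hy2.le])
          have : F y ≤ F x₀ := F_mono hFν this
          rw [hy2] at this
          exact absurd this (not_le.mpr hlt)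
        rw [hset]
        have := hFν x₀
        rw [hFx₀] at this
        rw [← ENNReal.ofReal_toReal (measure_ne_top ν (Iic x₀)), ← this]
      · -- empty
        rw [not_nonempty_iff_eq_empty] at hS
        rw [hS]
        have ht0 : t ≤ 0 := by
          have hev : ∀ n : ℕ, t ≤ F (-(n:ℝ)) := by
            intro n
            by_contra hc
            push_neg at hc
            have : (-(n:ℝ)) ∈ F ⁻¹' Iic t := hc.le
            rw [hS] at this
            exact absurd this (notMem_empty _)
          exact ge_of_tendsto (F_tendsto_seq hFν) (Eventually.of_forall hev)
        have : t = 0 := le_antisymm ht0 ht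
        simp [this]
    rw [key]
    congr 1
    ring

lemma null_level (u : ℝ) : ν {y | F y = u} = 0 := by
  have hFm : Measurable F := hFc.measurable
  have h : {y | F y = u} = F ⁻¹' {u} := rfl
  rw [h, ← Measure.map_apply hFm (measurableSet_singleton u), map_F_eq hFν hFc]
  exact le_antisymm (le_trans (Measure.restrict_apply_le _ _) (by simp)) zero_le

end CDF

lemma poly_int (a b c : ℝ) :
    ∫ t in a..b, (2*t+c)^2 = ((2*b+c)^3 - (2*a+c)^3)/6 := by
  have hd : ∀ t : ℝ, HasDerivAt (fun t => (2*t+c)^3/6) ((2*t+c)^2) t := by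
    intro t
    have h1 : HasDerivAt (fun t : ℝ => 2*t+c) 2 t := by
      simpa using ((hasDerivAt_id t).const_mul 2).add_const c
    have h2 : HasDerivAt (fun t => (2*t+c)^3/6) (↑3 * (2*t+c)^(3-1) * 2 / 6) t :=
      (h1.pow 3).div_const 6
    convert h2 using 1
    ring
  rw [intervalIntegral.integral_eq_sub_of_hasDerivAt (fun t _ => hd t)
    ((Continuous.intervalIntegrable (by fun_prop) a b))]
  ring

section CDF2

variable {ν : Measure ℝ} [IsProbabilityMeasure ν] {F : ℝ → ℝ}
  (hFν : ∀ x, F x = (ν (Iic x)).toReal) (hFc : Continuous F)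

lemma calcInt (u : ℝ) (hu0 : 0 ≤ u) (hu1 : u ≤ 1) :
    ∫ t in Icc (0:ℝ) 1, ((if t < u then (1:ℝ) else -1) + (2*t - 2*u))^2 = 1/3 := by
  set f : ℝ → ℝ := fun t => ((if t < u then (1:ℝ) else -1) + (2*t - 2*u))^2 with hf
  have hfm : Measurable f := by
    apply Measurable.pow_const
    exact (Measurable.ite measurableSet_Iio measurable_const measurable_const).add (by fun_prop)
  have hbound : ∀ t : ℝ, t ∈ Icc (0:ℝ) 1 → ‖f t‖ ≤ 25 := by
    intro t ht
    have hft : f t = ((if t < u then (1:ℝ) else -1) + (2*t - 2*u))^2 := rfl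
    rw [hft, Real.norm_eq_abs, abs_of_nonneg (by positivity)]
    set s := (if t < u then (1:ℝ) else -1) with hs
    have h1 : -1 ≤ s := by rw [hs]; split_ifs <;> norm_num
    have h1' : s ≤ 1 := by rw [hs]; split_ifs <;> norm_num
    obtain ⟨ht0, ht1⟩ := ht
    nlinarith [sq_nonneg (s + (2*t - 2*u))]
  have hIntOn : ∀ s : Set ℝ, MeasurableSet s → s ⊆ Icc (0:ℝ) 1 → IntegrableOn f s := by
    intro s hs hsub
    haveI : IsFiniteMeasure (volume.restrict s) := by
      constructor
      rw [Measure.restrict_apply_univ]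
      exact lt_of_le_of_lt (measure_mono hsub) (by simp [Real.volume_Icc])
    refine Integrable.mono' (integrable_const 25) (hfm.aestronglyMeasurable.restrict) ?_
    rw [ae_restrict_iff' hs]
    exact ae_of_all _ (fun t ht => hbound t (hsub ht))
  rw [MeasureTheory.integral_Icc_eq_integral_Ioc]
  have hsplit : Ioc (0:ℝ) 1 = Ioc 0 u ∪ Ioc u 1 := (Ioc_union_Ioc_eq_Ioc hu0 hu1).symm
  rw [hsplit, setIntegral_union (Ioc_disjoint_Ioc_of_le le_rfl) measurableSet_Ioc
    (hIntOn _ measurableSet_Ioc (fun t ht => ⟨ht.1.le, le_trans ht.2 hu1⟩))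
    (hIntOn _ measurableSet_Ioc (fun t ht => ⟨le_trans hu0 ht.1.le, ht.2⟩))]
  have hpc1 : ∫ t in Ioc (0:ℝ) u, f t = ∫ t in Ioc (0:ℝ) u, (2*t+(1-2*u))^2 := by
    rw [MeasureTheory.integral_Ioc_eq_integral_Ioo, MeasureTheory.integral_Ioc_eq_integral_Ioo]
    refine setIntegral_congr_fun measurableSet_Ioo (fun t ht => ?_)
    rw [hf]
    simp only [if_pos ht.2]
    ring
  have hpc2 : ∫ t in Ioc u 1, f t = ∫ t in Ioc u 1, (2*t+(-1-2*u))^2 := by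
    refine setIntegral_congr_fun measurableSet_Ioc (fun t ht => ?_)
    rw [hf]
    simp only [if_neg (not_lt.mpr ht.1.le)]
    ring
  rw [hpc1, hpc2, ← intervalIntegral.integral_of_le hu0, ← intervalIntegral.integral_of_le hu1,
    poly_int, poly_int]
  ring

include hFν hFc

lemma integral_comp (G : ℝ → ℝ) (hG : Measurable G) :
    ∫ y, G (F y) ∂ν = ∫ t in Icc (0:ℝ) 1, G t := by
  rw [← map_F_eq hFν hFc, integral_map hFc.measurable.aemeasurable hG.aestronglyMeasurable]

lemma keyInt (x : ℝ) :
    ∫ y, (Real.sign (x - y) - ((2 * F x - 1) - (2 * F y - 1)))^2 ∂ν = 1/3 := by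
  set u := F x with hu
  set G : ℝ → ℝ := fun t => ((if t < u then (1:ℝ) else -1) + (2*t - 2*u))^2 with hG
  have hGm : Measurable G := by
    apply Measurable.pow_const
    exact (Measurable.ite measurableSet_Iio measurable_const measurable_const).add (by fun_prop)
  have hae : (fun y => (Real.sign (x - y) - ((2 * F x - 1) - (2 * F y - 1)))^2)
      =ᵐ[ν] fun y => G (F y) := by
    have hnull : ν {y | F y = u} = 0 := null_level hFν hFc u
    rw [Filter.EventuallyEq, ae_iff]
    refine measure_mono_null (fun y hy => ?_) hnull
    simp only [mem_setOf_eq] at hy ⊢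
    by_contra hne
    apply hy
    rcases lt_or_gt_of_ne hne with hlt | hgt
    · have hyx : y < x := by
        by_contra hc
        push_neg at hc
        exact absurd (F_mono hFν hc) (not_le.mpr hlt)
      rw [hG]
      simp only [if_pos hlt]
      rw [Real.sign_of_pos (by linarith : (0:ℝ) < x - y)]
      ring
    · have hyx : x < y := by
        by_contra hc
        push_neg at hc
        exact absurd (F_mono hFν hc) (not_le.mpr hgt)
      rw [hG]
      simp only [if_neg (not_lt.mpr hgt.le)]
      rw [Real.sign_of_neg (by linarith : x - y < 0)]
      ring
  rw [integral_congr_ae hae, integral_comp hFν hFc G hGm,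
    calcInt u (F_nonneg hFν x) (F_le_one hFν x)]

lemma keyInt2 (y : ℝ) :
    ∫ x, (Real.sign (x - y) - ((2 * F x - 1) - (2 * F y - 1)))^2 ∂ν = 1/3 := by
  have h : ∀ x : ℝ, (Real.sign (x - y) - ((2 * F x - 1) - (2 * F y - 1)))^2
      = (Real.sign (y - x) - ((2 * F y - 1) - (2 * F x - 1)))^2 := by
    intro x
    have hs : Real.sign (x - y) = - Real.sign (y - x) := by
      rw [← Real.sign_neg]; ring_nf
    rw [hs]; ring
  simp_rw [h]
  exact keyInt hFν hFc y

end CDF2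

lemma main_side {Ω : Type*} [MeasurableSpace Ω] (μ : Measure Ω) [IsProbabilityMeasure μ]
    (wi wj : Ω → ℝ) (hi : Measurable wi) (hj : Measurable wj)
    (hindep : IndepFun wi wj μ)
    (hid : Measure.map wi μ = Measure.map wj μ)
    (F : ℝ → ℝ) (hF : ∀ x, F x = (μ {ω | wi ω ≤ x}).toReal)
    (hFc : Continuous F)
    (vbar : Ω → ℝ)
    (hvbar : ∀ ω, vbar ω =
      Real.sign (wi ω - wj ω) - ((2 * F (wi ω) - 1) - (2 * F (wj ω) - 1))) :
    μ[(fun ω => (vbar ω) ^ 2) | MeasurableSpace.comap wi inferInstance]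
        =ᵐ[μ] fun _ => 1 / 3 := by
  set ν := Measure.map wi μ with hν
  haveI : IsProbabilityMeasure ν := Measure.isProbabilityMeasure_map hi.aemeasurable
  have hFν : ∀ x, F x = (ν (Iic x)).toReal := by
    intro x
    rw [hF, hν, Measure.map_apply hi measurableSet_Iic]
    rfl
  set g : ℝ × ℝ → ℝ :=
    fun p => (Real.sign (p.1 - p.2) - ((2 * F p.1 - 1) - (2 * F p.2 - 1)))^2 with hg
  have hFm := hFc.measurable
  have hgm : Measurable g := by
    apply Measurable.pow_const
    exact (sign_measurable'.comp (measurable_fst.sub measurable_snd)).sub (by fun_prop)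
  have hbd : ∀ p : ℝ × ℝ, ‖g p‖ ≤ 9 := by
    intro p
    have hgp : g p = (Real.sign (p.1 - p.2) - ((2 * F p.1 - 1) - (2 * F p.2 - 1)))^2 := rfl
    rw [hgp, Real.norm_eq_abs, abs_of_nonneg (by positivity)]
    have hs := Real.sign_apply_eq (p.1 - p.2)
    have hs1 : -1 ≤ Real.sign (p.1 - p.2) ∧ Real.sign (p.1 - p.2) ≤ 1 := by
      rcases hs with h | h | h <;> rw [h] <;> norm_num
    have hF1 := F_nonneg hFν p.1
    have hF2 := F_le_one hFν p.1
    have hF3 := F_nonneg hFν p.2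
    have hF4 := F_le_one hFν p.2
    nlinarith [hs1.1, hs1.2]
  have hvb : (fun ω => vbar ω ^ 2) = fun ω => g (wi ω, wj ω) := by
    funext ω; rw [hvbar]
  have hcomp : Measurable fun ω => g (wi ω, wj ω) := hgm.comp (hi.prodMk hj)
  have hfint : Integrable (fun ω => vbar ω ^ 2) μ := by
    rw [hvb]
    exact (integrable_const 9).mono' hcomp.aestronglyMeasurable (ae_of_all _ fun ω => hbd _)
  have hmap : μ.map (fun ω => (wi ω, wj ω)) = ν.prod ν := by
    rw [(indepFun_iff_map_prod_eq_prod_map_map hi.aemeasurable hj.aemeasurable).mp hindep,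
      ← hid]
  have hm : MeasurableSpace.comap wi inferInstance ≤ _ := hi.comap_le
  refine (ae_eq_condExp_of_forall_setIntegral_eq hm hfint ?_ ?_ ?_).symm
  · intro s _ _
    exact (integrable_const _).integrableOn
  · rintro s ⟨t, ht, rfl⟩ -
    have hνt : μ (wi ⁻¹' t) = ν t := by rw [hν, Measure.map_apply hi ht]
    set φ : ℝ × ℝ → ℝ := fun p => Set.indicator (t ×ˢ univ) g p with hφ
    have hφm : Measurable φ := hgm.indicator (ht.prod MeasurableSet.univ)
    have hφbd : ∀ p, ‖φ p‖ ≤ 9 := by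
      intro p
      by_cases hp : p ∈ t ×ˢ univ
      · rw [hφ]; simp only [Set.indicator_of_mem hp]; exact hbd p
      · rw [hφ]; simp only [Set.indicator_of_notMem hp]; simp
    have hφint : Integrable φ (ν.prod ν) :=
      (integrable_const 9).mono' hφm.aestronglyMeasurable (ae_of_all _ hφbd)
    have h1 : ∫ ω in wi ⁻¹' t, vbar ω ^ 2 ∂μ = ∫ ω, φ (wi ω, wj ω) ∂μ := by
      rw [show (fun ω => vbar ω ^ 2) = fun ω => g (wi ω, wj ω) from hvb]
      rw [← integral_indicator (hi ht)]
      congr 1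
      funext ω
      by_cases hω : wi ω ∈ t
      · rw [Set.indicator_of_mem (show ω ∈ wi ⁻¹' t from hω)]
        exact (Set.indicator_of_mem
          (show (wi ω, wj ω) ∈ t ×ˢ univ from ⟨hω, mem_univ _⟩) g).symm
      · rw [Set.indicator_of_notMem (show ω ∉ wi ⁻¹' t from hω)]
        exact (Set.indicator_of_notMem
          (show (wi ω, wj ω) ∉ t ×ˢ univ from fun hc => hω hc.1) g).symm
    have h2 : ∫ ω, φ (wi ω, wj ω) ∂μ = ∫ p, φ p ∂(ν.prod ν) := by
      rw [← hmap, integral_map (hi.prodMk hj).aemeasurable hφm.aestronglyMeasurable]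
    have h3 : ∫ p, φ p ∂(ν.prod ν) = ∫ x, ∫ y, φ (x, y) ∂ν ∂ν := integral_prod φ hφint
    have h4 : ∀ x, ∫ y, φ (x, y) ∂ν = Set.indicator t (fun _ => (1/3:ℝ)) x := by
      intro x
      by_cases hx : x ∈ t
      · rw [Set.indicator_of_mem hx]
        have heq : ∀ y, φ (x, y) = g (x, y) := fun y =>
          Set.indicator_of_mem (show (x, y) ∈ t ×ˢ univ from ⟨hx, mem_univ y⟩) g
        simp_rw [heq, hg]
        exact keyInt hFν hFc x
      · rw [Set.indicator_of_notMem hx]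
        have heq : ∀ y, φ (x, y) = 0 := fun y =>
          Set.indicator_of_notMem (show (x, y) ∉ t ×ˢ univ from fun hc => hx hc.1) g
        simp_rw [heq]
        simp
    rw [h1, h2, h3, integral_congr_ae (ae_of_all _ h4), integral_indicator ht,
      setIntegral_const, setIntegral_const, measureReal_def, measureReal_def, hνt]
  · exact StronglyMeasurable.aestronglyMeasurable stronglyMeasurable_const

/-- The nonlinear part of the Hoeffding decomposition has conditional second moment
`E[v̄₍ᵢⱼ₎² | wᵢ] = 1/3` and `E[v̄₍ᵢⱼ₎² | wⱼ] = 1/3` almost surely. -/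
theorem statement3 {Ω : Type*} [MeasurableSpace Ω] (μ : Measure Ω) [IsProbabilityMeasure μ]
    (wi wj : Ω → ℝ) (hi : Measurable wi) (hj : Measurable wj)
    (hindep : IndepFun wi wj μ)
    (hid : Measure.map wi μ = Measure.map wj μ)
    (F : ℝ → ℝ) (hF : ∀ x, F x = (μ {ω | wi ω ≤ x}).toReal)
    (hFc : Continuous F)
    (vbar : Ω → ℝ)
    (hvbar : ∀ ω, vbar ω =
      Real.sign (wi ω - wj ω) - ((2 * F (wi ω) - 1) - (2 * F (wj ω) - 1))) :
    (μ[(fun ω => (vbar ω) ^ 2) | MeasurableSpace.comap wi inferInstance]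
        =ᵐ[μ] fun _ => 1 / 3)
    ∧ (μ[(fun ω => (vbar ω) ^ 2) | MeasurableSpace.comap wj inferInstance]
        =ᵐ[μ] fun _ => 1 / 3) := by
  constructor
  · exact main_side μ wi wj hi hj hindep hid F hF hFc vbar hvbar
  · set vbar' : Ω → ℝ := fun ω =>
      Real.sign (wj ω - wi ω) - ((2 * F (wj ω) - 1) - (2 * F (wi ω) - 1)) with hvb'
    have hF' : ∀ x, F x = (μ {ω | wj ω ≤ x}).toReal := by
      intro x
      rw [hF]
      congr 1
      have hIic := congrArg (fun m : Measure ℝ => m (Iic x)) hid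
      rw [Measure.map_apply hi measurableSet_Iic, Measure.map_apply hj measurableSet_Iic] at hIic
      exact hIic
    have hswap : (fun ω => (vbar ω) ^ 2) = fun ω => (vbar' ω) ^ 2 := by
      funext ω
      rw [hvbar, hvb']
      have h : wi ω - wj ω = -(wj ω - wi ω) := by ring
      rw [h, Real.sign_neg]
      ring
    rw [hswap]
    exact main_side μ wj wi hj hi hindep.symm hid.symm F hF' hFc vbar'
      (fun ω => rfl)
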